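/- For every a ∈ (0,1), every 2×2 unitary matrix U and every c ∈ (−1,1), there exists a holomorphic map F : 𝔹₂ → 𝔻 such that F(φ_{a,U,c}(λ)) = λ·m_γ(λ) for all λ ∈ 𝔻, where γ = 2c/(1+c²). -/

import Mathlib

open Metric Set Complex

noncomputable section

/-- `ℂⁿ` with the Euclidean norm; `𝔹ₙ` is `Metric.ball 0 1` in this space. -/
abbrev En (n : ℕ) := EuclideanSpace ℂ (Fin n)

/-- The Möbius map `m_a` interchanging `0` and `a`. -/
def mob (a z : ℂ) : ℂ := (a - z) / (1 - (starRingEnd ℂ) a * z)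

/-- A Blaschke product of degree `k`: `z ↦ η * ∏ j, m_{α j}(z)` with `|η| = 1`, `α j ∈ 𝔻`. -/
def IsBlaschke (k : ℕ) (B : ℂ → ℂ) : Prop :=
  ∃ η : ℂ, ‖η‖ = 1 ∧ ∃ α : Fin k → ℂ, (∀ j, α j ∈ ball (0 : ℂ) 1) ∧
    ∀ z : ℂ, B z = η * ∏ j, mob (α j) z

/-- The Pick problem `𝔹ₙ → 𝔻`, `z j ↦ lam j`, is extremal: it is solvable by a holomorphic
map `𝔹ₙ → 𝔻`, but by no holomorphic solution with `sup_{𝔹ₙ} |G| < 1`. -/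
def ExtremalPick {n : ℕ} {ι : Type} (z : ι → En n) (lam : ι → ℂ) : Prop :=
  (∃ F : En n → ℂ, DifferentiableOn ℂ F (ball 0 1) ∧
      MapsTo F (ball (0 : En n) 1) (ball (0 : ℂ) 1) ∧ ∀ j, F (z j) = lam j) ∧
  ¬ ∃ G : En n → ℂ, DifferentiableOn ℂ G (ball 0 1) ∧ (∀ j, G (z j) = lam j) ∧
      ∃ r : ℝ, r < 1 ∧ ∀ x ∈ ball (0 : En n) 1, ‖G x‖ ≤ r

/-- An extremal 3-point Pick problem is non-degenerate if no 2-point subproblem is extremal. -/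
def ExtremalPick3Nondeg {n : ℕ} (z : Fin 3 → En n) (lam : Fin 3 → ℂ) : Prop :=
  ExtremalPick z lam ∧
    ∀ i j : Fin 3, i ≠ j → ¬ ExtremalPick ![z i, z j] ![lam i, lam j]

/-- The Hermitian product `⟨z,w⟩ = z₁·conj w₁ + z₂·conj w₂`. -/
def herm (z w : En 2) : ℂ :=
  z 0 * (starRingEnd ℂ) (w 0) + z 1 * (starRingEnd ℂ) (w 1)

/-- Orthogonal projection `P_w z = (⟨z,w⟩/‖w‖²)·w`. -/
def projW (w z : En 2) : En 2 := (herm z w / ((‖w‖ : ℂ) ^ 2)) • w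

open scoped Classical in
/-- The involutive automorphism `χ_w` of `𝔹₂` interchanging `0` and `w` (`χ_0 = id`). -/
def chiW (w z : En 2) : En 2 :=
  if w = 0 then z
  else (1 / (1 - herm z w)) •
    (w - projW w z - ((Real.sqrt (1 - ‖w‖ ^ 2) : ℝ) : ℂ) • (z - projW w z))

/-- The point `γ = 2c/(1 + c²)` as a complex number. -/
def gamc (c : ℝ) : ℂ := ((2 * c / (1 + c ^ 2) : ℝ) : ℂ)

/-- The map `φ_{a,U,c}(λ) = χ_w(U(a·m_c(λ), b·m_c(λ)²))`, `b = √(1−a²)`, `w = U(ac, bc²)`. -/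
def phiAUc (a : ℝ) (U : Matrix (Fin 2) (Fin 2) ℂ) (c : ℝ) (lam : ℂ) : En 2 :=
  chiW (WithLp.toLp 2 (U.mulVec ![(a : ℂ) * c, ((Real.sqrt (1 - a ^ 2) : ℝ) : ℂ) * (c : ℂ) ^ 2]))
    (WithLp.toLp 2 (U.mulVec ![(a : ℂ) * mob (c : ℂ) lam,
      ((Real.sqrt (1 - a ^ 2) : ℝ) : ℂ) * (mob (c : ℂ) lam) ^ 2]))


/-! ### Auxiliary lemmas for `stmt_11` -/

lemma aux_mulVec_two (U : Matrix (Fin 2) (Fin 2) ℂ) (v : Fin 2 → ℂ) (i : Fin 2) :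
    U.mulVec v i = U i 0 * v 0 + U i 1 * v 1 := by
  simp [Matrix.mulVec, dotProduct, Fin.sum_univ_two]

lemma aux_herm_sub (x y w : En 2) : herm (x - y) w = herm x w - herm y w := by
  simp [herm]; ring

lemma aux_herm_smul (α : ℂ) (x w : En 2) : herm (α • x) w = α * herm x w := by
  simp [herm]; ring

lemma aux_herm_chiW_w (w z : En 2) (hw : w ≠ 0) (hww : ((‖w‖ : ℝ) : ℂ)^2 = herm w w) :
    herm (chiW w z) w = (1 / (1 - herm z w)) * (herm w w - herm z w) := by
  have hn : (‖w‖ : ℂ) ≠ 0 := by simpa using (norm_ne_zero_iff.mpr hw)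
  have hproj : herm (projW w z) w = herm z w := by
    rw [projW, aux_herm_smul, ← hww]
    field_simp
  rw [chiW, if_neg hw, aux_herm_smul, aux_herm_sub, aux_herm_sub, aux_herm_smul,
    aux_herm_sub, hproj]
  ring

lemma aux_herm_chiW_u (w u z : En 2) (hw : w ≠ 0) (hwu : herm w u = 0) :
    herm (chiW w z) u =
      (1 / (1 - herm z w)) * (-(((Real.sqrt (1 - ‖w‖ ^ 2) : ℝ) : ℂ)) * herm z u) := by
  have hproj : herm (projW w z) u = 0 := by
    rw [projW, aux_herm_smul, hwu, mul_zero]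
  rw [chiW, if_neg hw, aux_herm_smul, aux_herm_sub, aux_herm_sub, aux_herm_smul,
    aux_herm_sub, hproj, hwu]
  ring

lemma aux_herm_mulVec_right (U : Matrix (Fin 2) (Fin 2) ℂ) (x : En 2) (v : Fin 2 → ℂ) :
    herm x (WithLp.toLp 2 (U.mulVec v)) = herm (WithLp.toLp 2 ((star U).mulVec x)) (WithLp.toLp 2 v) := by
  simp only [herm, WithLp.ofLp_toLp, aux_mulVec_two, Matrix.star_apply, Matrix.conjTranspose_apply,
    Complex.star_def, map_add, map_mul, Complex.conj_conj]
  ring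

lemma aux_herm_U_U (U : Matrix (Fin 2) (Fin 2) ℂ) (hU : U ∈ Matrix.unitaryGroup (Fin 2) ℂ)
    (α β : Fin 2 → ℂ) : herm (WithLp.toLp 2 (U.mulVec α)) (WithLp.toLp 2 (U.mulVec β)) = herm (WithLp.toLp 2 α) (WithLp.toLp 2 β) := by
  rw [aux_herm_mulVec_right, WithLp.ofLp_toLp, Matrix.mulVec_mulVec, Matrix.mem_unitaryGroup_iff'.mp hU,
    Matrix.one_mulVec]

lemma aux_herm_starU (U : Matrix (Fin 2) (Fin 2) ℂ) (hU : U ∈ Matrix.unitaryGroup (Fin 2) ℂ)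
    (x : En 2) : herm (WithLp.toLp 2 ((star U).mulVec x)) (WithLp.toLp 2 ((star U).mulVec x)) = herm x x := by
  have h : ∀ i j, (U * star U) i j = (1 : Matrix (Fin 2) (Fin 2) ℂ) i j := fun i j => by
    rw [Matrix.mem_unitaryGroup_iff.mp hU]
  have h00 := h 0 0; have h01 := h 0 1; have h10 := h 1 0; have h11 := h 1 1
  simp only [Matrix.mul_apply, Fin.sum_univ_two, Matrix.star_apply,
    Matrix.conjTranspose_apply, Complex.star_def, Matrix.one_apply,
    if_neg (by decide : ¬ ((0 : Fin 2) = 1)), if_neg (by decide : ¬ ((1 : Fin 2) = 0)),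
    if_pos rfl, if_true] at h00 h01 h10 h11
  simp only [herm, WithLp.ofLp_toLp, aux_mulVec_two, Matrix.star_apply, Matrix.conjTranspose_apply,
    Complex.star_def, map_add, map_mul, Complex.conj_conj]
  have g01 : (starRingEnd ℂ) (U 0 0) * U 1 0 + (starRingEnd ℂ) (U 0 1) * U 1 1 = 0 := by
    have := congrArg (starRingEnd ℂ) h01
    simpa [map_add, map_mul, Complex.conj_conj, mul_comm] using this
  have g10 : (starRingEnd ℂ) (U 1 0) * U 0 0 + (starRingEnd ℂ) (U 1 1) * U 0 1 = 0 := by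
    have := congrArg (starRingEnd ℂ) h10
    simpa [map_add, map_mul, Complex.conj_conj, mul_comm] using this
  linear_combination (x 0 * (starRingEnd ℂ) (x 0)) * h00 + (x 0 * (starRingEnd ℂ) (x 1)) * g01
    + (x 1 * (starRingEnd ℂ) (x 0)) * g10 + (x 1 * (starRingEnd ℂ) (x 1)) * h11

lemma aux_one_sub_ne {z : ℂ} (h : Complex.normSq z < 1) : 1 - z ≠ 0 := by
  intro h0
  have : z = 1 := by linear_combination -h0
  rw [this] at h; simp at h

lemma aux_mob_den_ne {α : ℝ} (hα : α^2 < 1) {z : ℂ} (hz : Complex.normSq z < 1) :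
    1 - (α : ℂ) * z ≠ 0 := by
  apply aux_one_sub_ne
  rw [Complex.normSq_mul, Complex.normSq_ofReal]
  nlinarith [Complex.normSq_nonneg z]

lemma aux_normSq_sub_real (α : ℝ) (z : ℂ) :
    Complex.normSq ((α : ℂ) - z) = α^2 - 2*α*z.re + Complex.normSq z := by
  simp [Complex.normSq_apply, Complex.sub_re, Complex.sub_im]; ring

lemma aux_normSq_one_sub_mul (α : ℝ) (z : ℂ) :
    Complex.normSq (1 - (α : ℂ) * z) = 1 - 2*α*z.re + α^2 * Complex.normSq z := by
  simp [Complex.normSq_apply, Complex.sub_re, Complex.sub_im, Complex.mul_re, Complex.mul_im]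
  ring

lemma aux_mob_normSq_lt {α : ℝ} (hα : α^2 < 1) {z : ℂ} (hz : Complex.normSq z < 1) :
    Complex.normSq (mob (α : ℂ) z) < 1 := by
  rw [mob, Complex.conj_ofReal, Complex.normSq_div, aux_normSq_sub_real,
    aux_normSq_one_sub_mul]
  have h1 : Complex.normSq (1 - (α : ℂ) * z) > 0 :=
    Complex.normSq_pos.mpr (aux_mob_den_ne hα hz)
  rw [aux_normSq_one_sub_mul] at h1
  rw [div_lt_one h1]
  nlinarith [Complex.normSq_nonneg z]

lemma aux_quad_bound {b : ℝ} (hb : 0 < b) {Z₁ Z₂ : ℂ}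
    (h : Complex.normSq Z₁ + Complex.normSq Z₂ < 1) :
    Complex.normSq ((Z₁^2 + ((2*b : ℝ) : ℂ) * Z₂) / ((1 + b^2 : ℝ) : ℂ)) < 1 := by
  have h1 : ‖Z₁‖ ^ 2 + ‖Z₂‖ ^ 2 < 1 := by
    rwa [Complex.sq_norm, Complex.sq_norm]
  have habs : ‖Z₁^2 + ((2*b : ℝ) : ℂ) * Z₂‖
      ≤ ‖Z₁‖ ^ 2 + 2*b*‖Z₂‖ := by
    calc ‖Z₁^2 + ((2*b : ℝ) : ℂ) * Z₂‖
        ≤ ‖Z₁^2‖ + ‖((2*b : ℝ) : ℂ) * Z₂‖ := norm_add_le _ _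
      _ = ‖Z₁‖ ^ 2 + 2*b*‖Z₂‖ := by
          rw [norm_pow, norm_mul, Complex.norm_real, Real.norm_eq_abs, abs_of_pos (by linarith)]
  rw [Complex.normSq_div, Complex.normSq_ofReal]
  have hden : (0:ℝ) < (1 + b^2) * (1 + b^2) := by nlinarith
  rw [div_lt_one hden]
  have hlt : ‖Z₁‖ ^ 2 + 2*b*‖Z₂‖ < 1 + b^2 := by
    nlinarith [sq_nonneg (‖Z₂‖ - b), norm_nonneg Z₁, norm_nonneg Z₂]
  have := Complex.sq_norm (Z₁^2 + ((2*b : ℝ) : ℂ) * Z₂)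
  nlinarith [norm_nonneg (Z₁^2 + ((2*b : ℝ) : ℂ) * Z₂)]

lemma aux_normSq_lt_one_abs {z : ℂ} (h : Complex.normSq z < 1) : ‖z‖ < 1 := by
  rw [← Complex.sq_norm] at h
  nlinarith [norm_nonneg z]

lemma aux_ball_normSq {x : En 2} (hx : x ∈ ball (0 : En 2) 1) :
    Complex.normSq (x 0) + Complex.normSq (x 1) < 1 := by
  rw [mem_ball_zero_iff] at hx
  have h := EuclideanSpace.norm_eq x
  rw [Fin.sum_univ_two] at h
  have h0 : ‖x 0‖^2 = Complex.normSq (x 0) := by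
    rw [Complex.sq_norm]
  have h1 : ‖x 1‖^2 = Complex.normSq (x 1) := by
    rw [Complex.sq_norm]
  nlinarith [Real.sq_sqrt (by positivity : (0:ℝ) ≤ ‖x 0‖^2 + ‖x 1‖^2),
    Real.sqrt_nonneg (‖x 0‖^2 + ‖x 1‖^2), norm_nonneg x]

lemma aux_herm_diff (w : En 2) : Differentiable ℂ (fun x : En 2 => herm x w) := by
  have h0 : Differentiable ℂ (fun x : En 2 => x 0) :=
    (EuclideanSpace.proj (0 : Fin 2) (𝕜 := ℂ)).differentiable
  have h1 : Differentiable ℂ (fun x : En 2 => x 1) :=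
    (EuclideanSpace.proj (1 : Fin 2) (𝕜 := ℂ)).differentiable
  exact (h0.mul_const _).add (h1.mul_const _)


def auxA (ρ : ℝ) (w x : En 2) : ℂ := (((ρ:ℝ):ℂ) - herm x w) / (1 - herm x w)

def auxB (σ : ℝ) (w u x : En 2) : ℂ := -((σ:ℝ):ℂ) * herm x u / (1 - herm x w)

def auxZ1 (a b c ρ σ : ℝ) (w u x : En 2) : ℂ :=
  (auxA ρ w x * ((a:ℂ)*(c:ℂ)) - auxB σ w u x * (((b:ℝ):ℂ)*(c:ℂ)^2)) / ((ρ:ℝ):ℂ)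

def auxZ2 (a b c ρ σ : ℝ) (w u x : En 2) : ℂ :=
  (auxA ρ w x * (((b:ℝ):ℂ)*(c:ℂ)^2) + auxB σ w u x * ((a:ℂ)*(c:ℂ))) / ((ρ:ℝ):ℂ)

def auxG (a b c ρ σ : ℝ) (w u x : En 2) : ℂ :=
  (auxZ1 a b c ρ σ w u x ^ 2 + ((2*b:ℝ):ℂ) * auxZ2 a b c ρ σ w u x) / ((1 + b^2 : ℝ):ℂ)

lemma aux_div_div (x y z : ℂ) (hy : y ≠ 0) (hz : z ≠ 0) : (x/z)/(y/z) = x/y := by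
  field_simp

lemma aux_mob_comp {α : ℝ} (hα : α^2 < 1) {G : En 2 → ℂ}
    (hGd : DifferentiableOn ℂ G (ball 0 1))
    (hG : ∀ x ∈ ball (0 : En 2) 1, Complex.normSq (G x) < 1) :
    DifferentiableOn ℂ (fun x => mob ((α:ℝ):ℂ) (G x)) (ball 0 1) ∧
    MapsTo (fun x => mob ((α:ℝ):ℂ) (G x)) (ball (0 : En 2) 1) (ball (0 : ℂ) 1) := by
  constructor
  · have heq : (fun x => mob (α:ℂ) (G x))
        = fun x => ((α:ℂ) - G x) * (1 - (α:ℂ) * G x)⁻¹ := by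
      funext x; rw [mob, Complex.conj_ofReal, div_eq_mul_inv]
    rw [heq]
    intro x hx
    exact (((differentiableWithinAt_const _).sub (hGd x hx)).mul
      (((differentiableWithinAt_const _).sub
        ((differentiableWithinAt_const _).mul (hGd x hx))).inv
          (aux_mob_den_ne hα (hG x hx))))
  · intro x hx
    rw [mem_ball_zero_iff]
    exact aux_normSq_lt_one_abs (aux_mob_normSq_lt hα (hG x hx))

lemma aux_final (c : ℝ) (hcm : -1 < c) (hcp : c < 1) (lam : ℂ)
    (hnl : Complex.normSq lam < 1) :
    mob ((c^2 : ℝ) : ℂ) ((mob (c:ℂ) lam)^2) = lam * mob (gamc c) lam := by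
  have hc2 : c^2 < 1 := by nlinarith
  have hc4 : (c^2)^2 < 1 := by nlinarith
  have hclam : 1 - (c:ℂ)*lam ≠ 0 := aux_mob_den_ne hc2 hnl
  have hμ : Complex.normSq (mob (c:ℂ) lam) < 1 := aux_mob_normSq_lt hc2 hnl
  have hμ2 : Complex.normSq ((mob (c:ℂ) lam)^2) < 1 := by
    rw [sq, Complex.normSq_mul]
    nlinarith [Complex.normSq_nonneg (mob (c:ℂ) lam)]
  have hc2μ : 1 - ((c^2:ℝ):ℂ) * (mob (c:ℂ) lam)^2 ≠ 0 := aux_mob_den_ne hc4 hμ2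
  have hγ2 : (2*c/(1+c^2))^2 < 1 := by
    rw [div_pow, div_lt_one (by positivity)]
    nlinarith [sq_nonneg (1 - c^2)]
  have hγlam : 1 - ((2*c/(1+c^2):ℝ):ℂ) * lam ≠ 0 := aux_mob_den_ne hγ2 hnl
  have h1c2 : ((1 + c^2 : ℝ):ℂ) ≠ 0 := by
    exact_mod_cast (by positivity : (0:ℝ) < 1 + c^2).ne'
  have h1c2' : (1:ℂ) + (c:ℂ)^2 ≠ 0 := by push_cast at h1c2; exact h1c2
  have hden2 : ((1:ℂ) - (c:ℂ)*lam)^2 ≠ 0 := pow_ne_zero 2 hclam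
  have hD2 : (1:ℂ) + (c:ℂ)^2 - 2*(c:ℂ)*lam ≠ 0 := by
    have he : (1:ℂ) + (c:ℂ)^2 - 2*(c:ℂ)*lam
        = (1 - ((2*c/(1+c^2):ℝ):ℂ) * lam) * ((1:ℂ) + (c:ℂ)^2) := by
      push_cast
      field_simp
    rw [he]; exact mul_ne_zero hγlam h1c2'
  have hD1 : ((1:ℂ) - (c:ℂ)*lam)^2 - ((c^2:ℝ):ℂ) * ((c:ℂ) - lam)^2 ≠ 0 := by
    have he : ((1:ℂ) - (c:ℂ)*lam)^2 - ((c^2:ℝ):ℂ) * ((c:ℂ) - lam)^2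
        = (1 - ((c^2:ℝ):ℂ) * (mob (c:ℂ) lam)^2) * ((1:ℂ) - (c:ℂ)*lam)^2 := by
      rw [mob, Complex.conj_ofReal, div_pow]
      field_simp
    rw [he]; exact mul_ne_zero hc2μ hden2
  have hL : mob ((c^2 : ℝ) : ℂ) ((mob (c:ℂ) lam)^2)
      = (((c^2:ℝ):ℂ) * ((1:ℂ) - (c:ℂ)*lam)^2 - ((c:ℂ) - lam)^2)
        / (((1:ℂ) - (c:ℂ)*lam)^2 - ((c^2:ℝ):ℂ) * ((c:ℂ) - lam)^2) := by
    rw [mob, mob, Complex.conj_ofReal, Complex.conj_ofReal, div_pow]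
    rw [show ((c^2:ℝ):ℂ) - ((c:ℂ) - lam)^2/((1:ℂ) - (c:ℂ)*lam)^2
        = (((c^2:ℝ):ℂ) * ((1:ℂ) - (c:ℂ)*lam)^2 - ((c:ℂ) - lam)^2)/((1:ℂ) - (c:ℂ)*lam)^2 by
      field_simp]
    rw [show (1:ℂ) - ((c^2:ℝ):ℂ) * (((c:ℂ) - lam)^2/((1:ℂ) - (c:ℂ)*lam)^2)
        = (((1:ℂ) - (c:ℂ)*lam)^2 - ((c^2:ℝ):ℂ) * ((c:ℂ) - lam)^2)/((1:ℂ) - (c:ℂ)*lam)^2 by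
      field_simp]
    exact aux_div_div _ _ _ hD1 hden2
  have hR : mob (gamc c) lam
      = (2*(c:ℂ) - ((1:ℂ) + (c:ℂ)^2)*lam) / ((1:ℂ) + (c:ℂ)^2 - 2*(c:ℂ)*lam) := by
    rw [mob, gamc, Complex.conj_ofReal]
    rw [show ((2*c/(1+c^2):ℝ):ℂ) = 2*(c:ℂ)/((1:ℂ)+(c:ℂ)^2) by push_cast; ring]
    rw [show 2*(c:ℂ)/((1:ℂ)+(c:ℂ)^2) - lam
        = (2*(c:ℂ) - ((1:ℂ)+(c:ℂ)^2)*lam)/((1:ℂ)+(c:ℂ)^2) by field_simp]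
    rw [show (1:ℂ) - 2*(c:ℂ)/((1:ℂ)+(c:ℂ)^2)*lam
        = ((1:ℂ)+(c:ℂ)^2 - 2*(c:ℂ)*lam)/((1:ℂ)+(c:ℂ)^2) by field_simp]
    exact aux_div_div _ _ _ hD2 h1c2'
  rw [hL, hR]
  rw [div_eq_iff hD1, ← mul_div_assoc, div_mul_eq_mul_div, eq_div_iff hD2]
  push_cast
  ring


lemma aux_normSq_one_sub (z : ℂ) :
    Complex.normSq (1 - z) = 1 - 2*z.re + Complex.normSq z := by
  simp [Complex.normSq_apply, Complex.sub_re, Complex.sub_im]; ring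

lemma aux_np_lt_one {ρ n np nq : ℝ} (hρ1 : ρ < 1) (hn : n < 1) (hn0 : 0 ≤ n)
    (hpq : np + nq = ρ * n) (hnq : 0 ≤ nq) (hρ0 : 0 < ρ) : np < 1 := by nlinarith

lemma aux_ABlt {ρ n : ℝ} (p q : ℂ) (hρ0 : 0 < ρ) (hρ1 : ρ < 1) (hn : n < 1)
    (hpq : Complex.normSq p + Complex.normSq q = ρ * n) :
    Complex.normSq ((ρ:ℂ) - p) + (1-ρ) * Complex.normSq q
      < ρ * Complex.normSq (1 - p) := by
  have eA := aux_normSq_sub_real ρ p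
  have eB := aux_normSq_one_sub p
  have h1 : 0 ≤ Complex.normSq q := Complex.normSq_nonneg q
  have h2 : 0 ≤ Complex.normSq p := Complex.normSq_nonneg p
  have hn0 : 0 ≤ n := by nlinarith
  nlinarith [mul_pos (mul_pos hρ0 (show (0:ℝ) < 1 - ρ by linarith))
    (show (0:ℝ) < 1 - n by linarith)]

lemma aux_Zlt {S AB ρ : ℝ} (h : S * ρ = AB) (hAB : AB < ρ) (hρ0 : 0 < ρ) : S < 1 := by
  nlinarith

lemma aux_rot (A B k1 k2 r : ℂ) (hr : r ≠ 0)
    (hcr : (starRingEnd ℂ) r = r) (hc1 : (starRingEnd ℂ) k1 = k1)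
    (hc2 : (starRingEnd ℂ) k2 = k2) (hk : k1^2 + k2^2 = r) :
    ((A * k1 - B * k2)/r) * (starRingEnd ℂ) ((A * k1 - B * k2)/r)
      + ((A * k2 + B * k1)/r) * (starRingEnd ℂ) ((A * k2 + B * k1)/r)
      = (A * (starRingEnd ℂ) A + B * (starRingEnd ℂ) B) / r := by
  simp only [map_div₀, map_sub, map_add, map_mul, hcr, hc1, hc2]
  rw [div_mul_div_comm, div_mul_div_comm, ← add_div, div_eq_div_iff (by
    exact mul_ne_zero hr hr) hr]
  linear_combination ((A * (starRingEnd ℂ) A + B * (starRingEnd ℂ) B) * r) * hk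

lemma aux_pz_lt {a b c m : ℝ} (ha0 : 0 < a) (hb0 : 0 < b) (hab : b^2 = 1 - a^2)
    (habsc : |c| < 1) (hm0 : 0 ≤ m) (hm1 : m < 1) :
    a^2 * |c| * m + b^2*c^2*m^2 < 1 := by
  have ht0 : 0 ≤ |c| * m := mul_nonneg (abs_nonneg c) hm0
  have h1 : |c| * m < 1 := by nlinarith [abs_nonneg c]
  have h2 : c^2 = |c| * |c| := by rw [sq, ← abs_mul_abs_self c]
  have h3 : c^2*m^2 = (|c| * m)*(|c| * m) := by rw [h2]; ring
  nlinarith [h3, mul_pos (mul_pos ha0 ha0) (show (0:ℝ) < 1 - |c| * m by linarith),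
    mul_pos (mul_pos hb0 hb0) (show (0:ℝ) < 1 - (|c| * m)*(|c| * m) by nlinarith)]

set_option maxHeartbeats 1600000 in
/-- for `a ∈ (0,1)`, `U` unitary, `c ∈ (−1,1)`, there is a holomorphic
`F : 𝔹₂ → 𝔻` with `F(φ_{a,U,c}(λ)) = λ·m_γ(λ)` for all `λ ∈ 𝔻`, `γ = 2c/(1+c²)`. -/
theorem stmt_11 (a : ℝ) (ha : a ∈ Ioo (0 : ℝ) 1)
    (U : Matrix (Fin 2) (Fin 2) ℂ) (hU : U ∈ Matrix.unitaryGroup (Fin 2) ℂ)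
    (c : ℝ) (hc : c ∈ Ioo (-1 : ℝ) 1) :
    ∃ F : En 2 → ℂ, DifferentiableOn ℂ F (ball 0 1) ∧
      MapsTo F (ball (0 : En 2) 1) (ball (0 : ℂ) 1) ∧
      ∀ lam ∈ ball (0 : ℂ) 1, F (phiAUc a U c lam) = lam * mob (gamc c) lam := by
  obtain ⟨ha0, ha1⟩ := ha
  obtain ⟨hcm, hcp⟩ := hc
  set b := Real.sqrt (1 - a^2) with hbdef
  have hb2 : b^2 = 1 - a^2 := Real.sq_sqrt (by nlinarith)
  have hb0 : 0 < b := Real.sqrt_pos.mpr (by nlinarith)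
  have hc2 : c^2 < 1 := by nlinarith
  have hc4 : (c^2)^2 < 1 := by nlinarith
  have hbC : ((b:ℝ):ℂ)^2 = 1 - (a:ℂ)^2 := by exact_mod_cast congrArg (fun t : ℝ => (t:ℂ)) hb2
  have hmob0 : ∀ ζ : ℂ, mob 0 ζ = -ζ := by intro ζ; simp [mob]
  have hKpos : (0:ℝ) < 1 + b^2 := by nlinarith
  have hK : ((1 + b^2 : ℝ) : ℂ) ≠ 0 := by exact_mod_cast hKpos.ne'
  by_cases hc0 : c = 0
  · subst hc0
    refine ⟨fun x => mob 0 ((herm x (WithLp.toLp 2 (U.mulVec ![1,0])) ^ 2 +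
      ((2*b : ℝ) : ℂ) * herm x (WithLp.toLp 2 (U.mulVec ![0,1]))) / ((1 + b^2 : ℝ) : ℂ)), ?_, ?_, ?_⟩
    · simp only [hmob0, div_eq_mul_inv]
      exact ((((aux_herm_diff _).pow 2).add
        ((aux_herm_diff _).const_mul _)).mul_const _).differentiableOn.neg
    · intro x hx
      rw [mem_ball_zero_iff]
      apply aux_normSq_lt_one_abs
      simp only [hmob0, Complex.normSq_neg]
      apply aux_quad_bound hb0
      have hsum : Complex.normSq (herm x (WithLp.toLp 2 (U.mulVec ![1,0])))
          + Complex.normSq (herm x (WithLp.toLp 2 (U.mulVec ![0,1])))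
          = Complex.normSq (x 0) + Complex.normSq (x 1) := by
        rw [aux_herm_mulVec_right, aux_herm_mulVec_right]
        have hy := aux_herm_starU U hU x
        set y := (star U).mulVec x with hydef
        have e1 : herm (WithLp.toLp 2 y) (WithLp.toLp 2 ![1,0]) = y 0 := by simp [herm]
        have e2 : herm (WithLp.toLp 2 y) (WithLp.toLp 2 ![0,1]) = y 1 := by simp [herm]
        rw [e1, e2]
        simp only [herm, WithLp.ofLp_toLp] at hy
        have : (Complex.normSq (y 0) + Complex.normSq (y 1) : ℂ)
            = (Complex.normSq (x 0) + Complex.normSq (x 1) : ℂ) := by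
          rw [← Complex.mul_conj, ← Complex.mul_conj, ← Complex.mul_conj, ← Complex.mul_conj]
          exact hy
        exact_mod_cast this
      rw [hsum]
      exact aux_ball_normSq hx
    · intro lam hlam
      have h0C : ((0:ℝ):ℂ) = 0 := by norm_num
      have hvz : (![(a:ℂ) * 0, (b:ℝ) * (0:ℂ)^2] : Fin 2 → ℂ) = 0 := by
        funext i; fin_cases i <;> simp
      simp only [phiAUc, ← hbdef, h0C]
      rw [hvz, Matrix.mulVec_zero, WithLp.toLp_zero]
      rw [show chiW (0 : En 2) (WithLp.toLp 2 (U.mulVec ![(a:ℂ) * mob 0 lam, (b:ℝ) * (mob 0 lam)^2]))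
          = WithLp.toLp 2 (U.mulVec ![(a:ℂ) * mob 0 lam, (b:ℝ) * (mob 0 lam)^2]) by rw [chiW, if_pos rfl]]
      rw [aux_herm_U_U U hU, aux_herm_U_U U hU]
      have e1 : herm (WithLp.toLp 2 ![(a:ℂ) * mob 0 lam, (b:ℝ) * (mob 0 lam)^2]) (WithLp.toLp 2 ![1,0])
          = (a:ℂ) * mob 0 lam := by simp [herm]
      have e2 : herm (WithLp.toLp 2 ![(a:ℂ) * mob 0 lam, (b:ℝ) * (mob 0 lam)^2]) (WithLp.toLp 2 ![0,1])
          = (b:ℝ) * (mob 0 lam)^2 := by simp [herm]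
      rw [e1, e2]
      have hg0 : gamc 0 = 0 := by simp [gamc]
      rw [hg0]
      have hinner : ((a:ℂ) * mob 0 lam)^2 + ((2*b:ℝ):ℂ) * ((b:ℝ) * (mob 0 lam)^2)
          = ((1+b^2:ℝ):ℂ) * lam^2 := by
        rw [hmob0]; push_cast; linear_combination (lam^2) * hbC
      rw [hinner, hmob0, hmob0]
      have hKC : (1:ℂ) + ((b:ℝ):ℂ)^2 ≠ 0 := by exact_mod_cast hK
      field_simp
  · -- c ≠ 0
    have hcc : 0 < c^2 := lt_of_le_of_ne (sq_nonneg c) (Ne.symm (pow_ne_zero 2 hc0))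
    set ρ := a^2*c^2 + b^2*c^4 with hρdef
    have hρ0 : 0 < ρ := by nlinarith [mul_pos (mul_pos ha0 ha0) hcc, sq_nonneg (b*c^2)]
    have hc42 : c^4 ≤ c^2 := by nlinarith
    have hρ1 : ρ < 1 := by nlinarith [mul_pos hb0 hb0, sq_nonneg a]
    set σ := Real.sqrt (1 - ρ) with hσdef
    have hσ2 : σ^2 = 1 - ρ := Real.sq_sqrt (by linarith)
    have hρC : ((ρ:ℝ):ℂ) ≠ 0 := by exact_mod_cast hρ0.ne'
    have h1ρC : (1:ℂ) - ((ρ:ℝ):ℂ) ≠ 0 := by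
      have h2 : ((1 - ρ : ℝ):ℂ) ≠ 0 := by
        exact_mod_cast (show (0:ℝ) < 1 - ρ by linarith).ne'
      intro h0
      apply h2
      push_cast
      linear_combination h0
    set w : En 2 := WithLp.toLp 2 (U.mulVec ![(a:ℂ)*(c:ℂ), ((b:ℝ):ℂ)*(c:ℂ)^2]) with hwdef
    set u : En 2 := WithLp.toLp 2 (U.mulVec ![-(((b:ℝ):ℂ)*(c:ℂ)^2), (a:ℂ)*(c:ℂ)]) with hudef
    have hρc2 : ((ρ:ℝ):ℂ) = (a:ℂ)^2*(c:ℂ)^2 + ((b:ℝ):ℂ)^2*(c:ℂ)^4 := by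
      rw [hρdef]; push_cast; ring
    have hww : herm w w = ((ρ:ℝ):ℂ) := by
      rw [hwdef, aux_herm_U_U U hU, hρc2]
      simp only [herm, WithLp.ofLp_toLp, Matrix.cons_val_zero, Matrix.cons_val_one, Matrix.head_cons,
        map_mul, map_pow, Complex.conj_ofReal]
      ring
    have hwu : herm w u = 0 := by
      rw [hwdef, hudef, aux_herm_U_U U hU]
      simp only [herm, WithLp.ofLp_toLp, Matrix.cons_val_zero, Matrix.cons_val_one, Matrix.head_cons,
        map_mul, map_pow, map_neg, Complex.conj_ofReal]
      ring
    have hnormSqw : Complex.normSq (w 0) + Complex.normSq (w 1) = ρ := by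
      have key : ((Complex.normSq (w 0) + Complex.normSq (w 1) : ℝ) : ℂ) = ((ρ:ℝ):ℂ) := by
        push_cast
        rw [← Complex.mul_conj, ← Complex.mul_conj]
        exact hww
      exact_mod_cast key
    have hnw2 : ‖w‖^2 = ρ := by
      have h := EuclideanSpace.norm_eq w
      rw [Fin.sum_univ_two] at h
      have h0 : ‖w 0‖^2 = Complex.normSq (w 0) := by rw [Complex.sq_norm]
      have h1 : ‖w 1‖^2 = Complex.normSq (w 1) := by rw [Complex.sq_norm]
      rw [h, Real.sq_sqrt (by positivity), h0, h1, hnormSqw]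
    have hw0 : w ≠ 0 := by
      intro h
      rw [h, norm_zero] at hnw2
      nlinarith
    have hwwC : ((‖w‖:ℝ):ℂ)^2 = herm w w := by
      rw [hww]
      exact_mod_cast congrArg (fun t : ℝ => (t:ℂ)) hnw2
    have hσw : Real.sqrt (1 - ‖w‖^2) = σ := by rw [hnw2, hσdef]
    -- Parseval identity
    have hpqx : ∀ x : En 2, Complex.normSq (herm x w) + Complex.normSq (herm x u)
        = ρ * (Complex.normSq (x 0) + Complex.normSq (x 1)) := by
      intro x
      have hy := aux_herm_starU U hU x
      simp only [herm, WithLp.ofLp_toLp] at hy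
      have key : ((Complex.normSq (herm x w) + Complex.normSq (herm x u) : ℝ) : ℂ)
          = ((ρ:ℝ):ℂ) * ((Complex.normSq (x 0) + Complex.normSq (x 1) : ℝ) : ℂ) := by
        push_cast
        rw [← Complex.mul_conj, ← Complex.mul_conj, ← Complex.mul_conj, ← Complex.mul_conj]
        rw [hwdef, hudef, aux_herm_mulVec_right, aux_herm_mulVec_right]
        simp only [herm, WithLp.ofLp_toLp, Matrix.cons_val_zero, Matrix.cons_val_one, Matrix.head_cons,
          map_add, map_mul, map_neg, map_pow, Complex.conj_ofReal, Complex.conj_conj]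
        rw [hρc2]
        linear_combination ((a:ℂ)^2*(c:ℂ)^2 + ((b:ℝ):ℂ)^2*(c:ℂ)^4) * hy
      exact_mod_cast key
    -- ball facts
    have hball : ∀ x ∈ ball (0 : En 2) 1, (1 - herm x w ≠ 0)
        ∧ Complex.normSq (auxG a b c ρ σ w u x) < 1 := by
      intro x hx
      have hn := aux_ball_normSq hx
      have hpq := hpqx x
      have hn0 : 0 ≤ Complex.normSq (x 0) := Complex.normSq_nonneg _
      have hn1 : 0 ≤ Complex.normSq (x 1) := Complex.normSq_nonneg _
      have hnq : 0 ≤ Complex.normSq (herm x u) := Complex.normSq_nonneg _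
      have hnp : 0 ≤ Complex.normSq (herm x w) := Complex.normSq_nonneg _
      have hp1 : Complex.normSq (herm x w) < 1 :=
        aux_np_lt_one hρ1 hn (by linarith) hpq hnq hρ0
      have hne : 1 - herm x w ≠ 0 := aux_one_sub_ne hp1
      refine ⟨hne, ?_⟩
      have hdpos : 0 < Complex.normSq (1 - herm x w) := Complex.normSq_pos.mpr hne
      have hA : Complex.normSq (auxA ρ w x)
          = Complex.normSq (((ρ:ℝ):ℂ) - herm x w) / Complex.normSq (1 - herm x w) := by
        rw [auxA, Complex.normSq_div]
      have hB : Complex.normSq (auxB σ w u x)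
          = (1-ρ) * Complex.normSq (herm x u) / Complex.normSq (1 - herm x w) := by
        rw [auxB, Complex.normSq_div, Complex.normSq_mul, Complex.normSq_neg,
          Complex.normSq_ofReal]
        rw [show σ*σ = 1 - ρ by rw [← hσ2]; ring]
      have hABlt : Complex.normSq (auxA ρ w x) + Complex.normSq (auxB σ w u x) < ρ := by
        rw [hA, hB, ← add_div, div_lt_iff₀ hdpos]
        exact aux_ABlt (herm x w) (herm x u) hρ0 hρ1 hn hpq
      have hZsum : (Complex.normSq (auxZ1 a b c ρ σ w u x)
          + Complex.normSq (auxZ2 a b c ρ σ w u x)) * ρ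
          = Complex.normSq (auxA ρ w x) + Complex.normSq (auxB σ w u x) := by
        have key : (((Complex.normSq (auxZ1 a b c ρ σ w u x)
            + Complex.normSq (auxZ2 a b c ρ σ w u x)) * ρ : ℝ) : ℂ)
            = ((Complex.normSq (auxA ρ w x) + Complex.normSq (auxB σ w u x) : ℝ) : ℂ) := by
          push_cast
          rw [← Complex.mul_conj, ← Complex.mul_conj, ← Complex.mul_conj, ← Complex.mul_conj]
          rw [auxZ1, auxZ2]
          rw [aux_rot (auxA ρ w x) (auxB σ w u x) ((a:ℂ)*(c:ℂ)) (((b:ℝ):ℂ)*(c:ℂ)^2)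
            ((ρ:ℝ):ℂ) hρC (Complex.conj_ofReal ρ)
            (by simp [map_mul, Complex.conj_ofReal])
            (by simp [map_mul, map_pow, Complex.conj_ofReal])
            (by rw [hρc2]; ring)]
          rw [div_mul_cancel₀ _ hρC]
        exact_mod_cast key
      have hZlt : Complex.normSq (auxZ1 a b c ρ σ w u x)
          + Complex.normSq (auxZ2 a b c ρ σ w u x) < 1 := aux_Zlt hZsum hABlt hρ0
      have hq := aux_quad_bound hb0 hZlt
      rw [auxG]
      exact hq
    -- differentiability of G
    have hhermw := aux_herm_diff w
    have hhermu := aux_herm_diff u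
    have hGd : DifferentiableOn ℂ (fun x : En 2 => auxG a b c ρ σ w u x) (ball 0 1) := by
      intro x hx
      have hne := (hball x hx).1
      have hAd : DifferentiableWithinAt ℂ (fun y : En 2 => auxA ρ w y) (ball 0 1) x := by
        simp only [auxA, div_eq_mul_inv]
        exact ((differentiableWithinAt_const _).sub (hhermw x).differentiableWithinAt).mul
          (((differentiableWithinAt_const _).sub (hhermw x).differentiableWithinAt).inv hne)
      have hBd : DifferentiableWithinAt ℂ (fun y : En 2 => auxB σ w u y) (ball 0 1) x := by
        simp only [auxB, div_eq_mul_inv, neg_mul]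
        exact (((hhermu x).differentiableWithinAt.const_mul _).mul
          (((differentiableWithinAt_const _).sub (hhermw x).differentiableWithinAt).inv hne)).neg
      have hZ1d : DifferentiableWithinAt ℂ (fun y : En 2 => auxZ1 a b c ρ σ w u y)
          (ball 0 1) x := by
        simp only [auxZ1, div_eq_mul_inv]
        exact ((hAd.mul_const _).sub (hBd.mul_const _)).mul_const _
      have hZ2d : DifferentiableWithinAt ℂ (fun y : En 2 => auxZ2 a b c ρ σ w u y)
          (ball 0 1) x := by
        simp only [auxZ2, div_eq_mul_inv]
        exact ((hAd.mul_const _).add (hBd.mul_const _)).mul_const _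
      simp only [auxG, div_eq_mul_inv]
      exact ((hZ1d.pow 2).add (hZ2d.const_mul _)).mul_const _
    obtain ⟨hFd, hFm⟩ := aux_mob_comp (α := c^2) hc4 hGd (fun x hx => (hball x hx).2)
    refine ⟨fun x => mob ((c^2:ℝ):ℂ) (auxG a b c ρ σ w u x), hFd, hFm, ?_⟩
    intro lam hlam
    have hnl : Complex.normSq lam < 1 := by
      rw [mem_ball_zero_iff] at hlam
      rw [← Complex.sq_norm]
      nlinarith [norm_nonneg lam]
    have hμ : Complex.normSq (mob (c:ℂ) lam) < 1 := aux_mob_normSq_lt hc2 hnl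
    have habsμ : ‖mob (c:ℂ) lam‖ < 1 := aux_normSq_lt_one_abs hμ
    set z : En 2 := WithLp.toLp 2 (U.mulVec ![(a:ℂ) * mob (c:ℂ) lam, ((b:ℝ):ℂ) * (mob (c:ℂ) lam)^2])
      with hzdef
    have hφ : phiAUc a U c lam = chiW w z := by
      simp only [phiAUc, hzdef, hwdef, hbdef]
    have hpz : herm z w = (a:ℂ)^2*(c:ℂ)*mob (c:ℂ) lam
        + ((b:ℝ):ℂ)^2*(c:ℂ)^2*(mob (c:ℂ) lam)^2 := by
      rw [hzdef, hwdef, aux_herm_U_U U hU]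
      simp only [herm, WithLp.ofLp_toLp, Matrix.cons_val_zero, Matrix.cons_val_one, Matrix.head_cons,
        map_mul, map_pow, Complex.conj_ofReal]
      ring
    have hqz : herm z u = (a:ℂ)*((b:ℝ):ℂ)*(c:ℂ)*(mob (c:ℂ) lam)^2
        - (a:ℂ)*((b:ℝ):ℂ)*(c:ℂ)^2*mob (c:ℂ) lam := by
      rw [hzdef, hudef, aux_herm_U_U U hU]
      simp only [herm, WithLp.ofLp_toLp, Matrix.cons_val_zero, Matrix.cons_val_one, Matrix.head_cons,
        map_mul, map_pow, map_neg, Complex.conj_ofReal]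
      ring
    have habsc : |c| < 1 := abs_lt.mpr ⟨hcm, hcp⟩
    have hpzlt : Complex.normSq (herm z w) < 1 := by
      rw [hpz, ← Complex.sq_norm]
      have hbnd : ‖(a:ℂ)^2*(c:ℂ)*mob (c:ℂ) lam
          + ((b:ℝ):ℂ)^2*(c:ℂ)^2*(mob (c:ℂ) lam)^2‖
          ≤ a^2 * |c| * ‖mob (c:ℂ) lam‖
            + b^2*c^2*(‖mob (c:ℂ) lam‖)^2 := by
        calc ‖(a:ℂ)^2*(c:ℂ)*mob (c:ℂ) lam
            + ((b:ℝ):ℂ)^2*(c:ℂ)^2*(mob (c:ℂ) lam)^2‖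
            ≤ ‖(a:ℂ)^2*(c:ℂ)*mob (c:ℂ) lam‖
              + ‖((b:ℝ):ℂ)^2*(c:ℂ)^2*(mob (c:ℂ) lam)^2‖ :=
            norm_add_le _ _
          _ = a^2 * |c| * ‖mob (c:ℂ) lam‖
              + b^2*c^2*(‖mob (c:ℂ) lam‖)^2 := by
            simp only [norm_mul, norm_pow, Complex.norm_real, Real.norm_eq_abs]
            rw [abs_of_pos ha0, abs_of_pos hb0, sq_abs]
      have hm0 : 0 ≤ ‖mob (c:ℂ) lam‖ := norm_nonneg _
      have habs0 : 0 ≤ ‖(a:ℂ)^2*(c:ℂ)*mob (c:ℂ) lam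
          + ((b:ℝ):ℂ)^2*(c:ℂ)^2*(mob (c:ℂ) lam)^2‖ := norm_nonneg _
      have hlt := aux_pz_lt ha0 hb0 hb2 habsc hm0 habsμ
      nlinarith
    have hz1 : 1 - herm z w ≠ 0 := aux_one_sub_ne hpzlt
    have hermφw : herm (chiW w z) w = (1 / (1 - herm z w)) * (((ρ:ℝ):ℂ) - herm z w) := by
      rw [aux_herm_chiW_w w z hw0 hwwC, hww]
    have hermφu : herm (chiW w z) u = (1 / (1 - herm z w)) * (-((σ:ℝ):ℂ) * herm z u) := by
      rw [aux_herm_chiW_u w u z hw0 hwu, hσw]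
    have hAφ : auxA ρ w (chiW w z) = herm z w := by
      rw [auxA, hermφw]
      rw [show 1 - 1 / (1 - herm z w) * (((ρ:ℝ):ℂ) - herm z w)
          = (1 - ((ρ:ℝ):ℂ)) / (1 - herm z w) by field_simp; ring]
      rw [show ((ρ:ℝ):ℂ) - 1 / (1 - herm z w) * (((ρ:ℝ):ℂ) - herm z w)
          = herm z w * (1 - ((ρ:ℝ):ℂ)) / (1 - herm z w) by field_simp; ring]
      rw [aux_div_div _ _ _ h1ρC hz1, mul_div_assoc, div_self h1ρC, mul_one]
    have hσC : ((σ:ℝ):ℂ)^2 = 1 - ((ρ:ℝ):ℂ) := by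
      have hcast : ((σ^2 : ℝ):ℂ) = ((1 - ρ : ℝ):ℂ) := by exact_mod_cast congrArg (fun t : ℝ => (t:ℂ)) hσ2
      push_cast at hcast
      exact hcast
    have hBφ : auxB σ w u (chiW w z) = herm z u := by
      rw [auxB, hermφu, hermφw]
      rw [show 1 - 1 / (1 - herm z w) * (((ρ:ℝ):ℂ) - herm z w)
          = (1 - ((ρ:ℝ):ℂ)) / (1 - herm z w) by field_simp; ring]
      rw [show -((σ:ℝ):ℂ) * (1 / (1 - herm z w) * (-((σ:ℝ):ℂ) * herm z u))
          = herm z u * ((σ:ℝ):ℂ)^2 / (1 - herm z w) by field_simp]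
      rw [aux_div_div _ _ _ h1ρC hz1, hσC, mul_div_assoc, div_self h1ρC, mul_one]
    have hZ1φ : auxZ1 a b c ρ σ w u (chiW w z) = (a:ℂ) * mob (c:ℂ) lam := by
      rw [auxZ1, hAφ, hBφ, hpz, hqz]
      rw [div_eq_iff hρC, hρc2]
      ring
    have hZ2φ : auxZ2 a b c ρ σ w u (chiW w z) = ((b:ℝ):ℂ) * (mob (c:ℂ) lam)^2 := by
      rw [auxZ2, hAφ, hBφ, hpz, hqz]
      rw [div_eq_iff hρC, hρc2]
      ring
    have hGφ : auxG a b c ρ σ w u (chiW w z) = (mob (c:ℂ) lam)^2 := by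
      rw [auxG, hZ1φ, hZ2φ]
      have hinner : ((a:ℂ)*mob (c:ℂ) lam)^2
          + ((2*b:ℝ):ℂ)*(((b:ℝ):ℂ)*(mob (c:ℂ) lam)^2)
          = ((1+b^2:ℝ):ℂ)*(mob (c:ℂ) lam)^2 := by
        push_cast
        linear_combination ((mob (c:ℂ) lam)^2)*hbC
      rw [hinner, mul_comm, mul_div_assoc, div_self hK, mul_one]
    show mob ((c^2:ℝ):ℂ) (auxG a b c ρ σ w u (phiAUc a U c lam)) = lam * mob (gamc c) lam
    rw [hφ, hGφ]
    exact aux_final c hcm hcp lam hnl
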